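/- The Jacobian determinant of the Kahan map equals (ỹ_1 ỹ_2 ⋯ ỹ_m)/(y_1 y_2 ⋯ y_m); equivalently, det of the Jacobian of u ↦ ũ, where ũ_j = u_j(1+εH)/(1−εH+2εu_j) and H = u_m, equals (1−ε²H²)^{m−1} / ∏_{j=1}^{m−1} (1−εH+2εu_j)². -/

import Mathlib

lemma kahan_entry (m : ℕ) (ε : ℝ) (u : Fin (m + 1) → ℝ) (i j : Fin (m + 1))
    (hd : 1 - ε * u (Fin.last m) + 2 * ε * u i ≠ 0) :
    fderiv ℝ
        (fun v : Fin (m+1) → ℝ => v i * (1 + ε * v (Fin.last m)) / (1 - ε * v (Fin.last m) + 2 * ε * v i)) u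
        (Pi.single j 1)
    = ((1 - ε * u (Fin.last m) + 2 * ε * u i) *
         ((1 + ε * u (Fin.last m)) * ((Pi.single j 1 : Fin (m+1) → ℝ) i) + ε * u i * ((Pi.single j 1 : Fin (m+1) → ℝ) (Fin.last m)))
       - u i * (1 + ε * u (Fin.last m)) *
         (2 * ε * ((Pi.single j 1 : Fin (m+1) → ℝ) i) - ε * ((Pi.single j 1 : Fin (m+1) → ℝ) (Fin.last m))))
      / (1 - ε * u (Fin.last m) + 2 * ε * u i) ^ 2 := by
  have hi := hasFDerivAt_apply (𝕜 := ℝ) i u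
  have hl := hasFDerivAt_apply (𝕜 := ℝ) (Fin.last m) u
  have hN := hi.mul ((hl.const_mul ε).const_add 1)
  have hD := ((hl.const_mul ε).const_sub 1).add (hi.const_mul (2*ε))
  have hinv := (hasFDerivAt_inv' (𝕜 := ℝ) hd).comp u hD
  have h := hN.mul hinv
  simp only [Function.comp_def, Pi.mul_def, Pi.add_def] at h
  simp only [div_eq_mul_inv]
  rw [h.fderiv]
  simp only [ContinuousLinearMap.smul_apply, ContinuousLinearMap.sub_apply,
    ContinuousLinearMap.add_apply, ContinuousLinearMap.coe_smul', Pi.smul_apply,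
    ContinuousLinearMap.proj_apply, smul_eq_mul, ContinuousLinearMap.neg_apply,
    ContinuousLinearMap.coe_comp', Function.comp_apply, ContinuousLinearMap.mulLeftRight_apply]
  field_simp
  ring



/-- the Jacobian determinant of the Kahan map in the `u`-coordinates,
`ũ_j = u_j (1+εH)/(1−εH+2εu_j)` with `H = u_m` (the last of the `m+1` coordinates),
equals `(1−ε²H²)^m / ∏_{j<m} (1−εH+2εu_j)²`
(equivalently, the Jacobian of `y ↦ ỹ` equals `(ỹ_1 ⋯ ỹ_m)/(y_1 ⋯ y_m)`). -/
theorem kahan_jacobian (m : ℕ) (ε : ℝ) (u : Fin (m + 1) → ℝ)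
    (hden : ∀ k : Fin (m + 1), 1 - ε * u (Fin.last m) + 2 * ε * u k ≠ 0) :
    Matrix.det (Matrix.of fun i j : Fin (m + 1) =>
      fderiv ℝ
        (fun v => v i * (1 + ε * v (Fin.last m)) / (1 - ε * v (Fin.last m) + 2 * ε * v i)) u
        (Pi.single j 1))
      = (1 - ε ^ 2 * u (Fin.last m) ^ 2) ^ m /
        ∏ j ∈ Finset.univ.filter (fun j => j ≠ Fin.last m),
          (1 - ε * u (Fin.last m) + 2 * ε * u j) ^ 2 := by
  set H := u (Fin.last m) with hH
  have hentry : ∀ i j : Fin (m+1),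
      (Matrix.of fun i j : Fin (m + 1) =>
        fderiv ℝ
          (fun v => v i * (1 + ε * v (Fin.last m)) / (1 - ε * v (Fin.last m) + 2 * ε * v i)) u
          (Pi.single j 1)) i j
      = ((1 - ε * H + 2 * ε * u i) *
           ((1 + ε * H) * ((Pi.single j 1 : Fin (m+1) → ℝ) i)
             + ε * u i * ((Pi.single j 1 : Fin (m+1) → ℝ) (Fin.last m)))
         - u i * (1 + ε * H) *
           (2 * ε * ((Pi.single j 1 : Fin (m+1) → ℝ) i)
             - ε * ((Pi.single j 1 : Fin (m+1) → ℝ) (Fin.last m))))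
        / (1 - ε * H + 2 * ε * u i) ^ 2 := by
    intro i j
    exact kahan_entry m ε u i j (hden i)
  rw [Matrix.det_of_upperTriangular]
  · -- product of diagonal entries
    have hdiag : ∀ i : Fin (m+1), i ≠ Fin.last m →
        (Matrix.of fun i j : Fin (m + 1) =>
          fderiv ℝ
            (fun v => v i * (1 + ε * v (Fin.last m)) / (1 - ε * v (Fin.last m) + 2 * ε * v i)) u
            (Pi.single j 1)) i i
        = (1 - ε ^ 2 * H ^ 2) / (1 - ε * H + 2 * ε * u i) ^ 2 := by
      intro i hi
      rw [hentry i i]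
      have h1 : (Pi.single i 1 : Fin (m+1) → ℝ) i = 1 := Pi.single_eq_same i 1
      have h2 : (Pi.single i 1 : Fin (m+1) → ℝ) (Fin.last m) = 0 :=
        Pi.single_eq_of_ne (Ne.symm hi) 1
      rw [h1, h2]
      ring_nf
    have hlastd : (Matrix.of fun i j : Fin (m + 1) =>
          fderiv ℝ
            (fun v => v i * (1 + ε * v (Fin.last m)) / (1 - ε * v (Fin.last m) + 2 * ε * v i)) u
            (Pi.single j 1)) (Fin.last m) (Fin.last m) = 1 := by
      rw [hentry]
      have h1 : (Pi.single (Fin.last m) 1 : Fin (m+1) → ℝ) (Fin.last m) = 1 :=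
        Pi.single_eq_same _ 1
      rw [h1]
      have hd := hden (Fin.last m)
      rw [← hH] at hd ⊢
      rw [div_eq_one_iff_eq (pow_ne_zero 2 hd)]
      ring
    rw [← Finset.prod_filter_mul_prod_filter_not Finset.univ (fun i => i ≠ Fin.last m)]
    have hrest : ∏ i ∈ Finset.univ.filter (fun i => ¬ i ≠ Fin.last m),
        (Matrix.of fun i j : Fin (m + 1) =>
          fderiv ℝ
            (fun v => v i * (1 + ε * v (Fin.last m)) / (1 - ε * v (Fin.last m) + 2 * ε * v i)) u
            (Pi.single j 1)) i i = 1 := by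
      have : Finset.univ.filter (fun i : Fin (m+1) => ¬ i ≠ Fin.last m) = {Fin.last m} := by
        ext i; simp
      rw [this, Finset.prod_singleton, hlastd]
    rw [hrest, mul_one]
    rw [Finset.prod_congr rfl (fun i hi => hdiag i (Finset.mem_filter.mp hi).2)]
    rw [Finset.prod_div_distrib, Finset.prod_const]
    congr 1
    have : (Finset.univ.filter (fun i : Fin (m+1) => i ≠ Fin.last m)).card = m := by
      rw [Finset.filter_ne' Finset.univ (Fin.last m)]
      simp [Finset.card_erase_of_mem]
    rw [this]
  · -- upper triangular
    intro i j hji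
    rw [hentry i j]
    have h1 : (Pi.single j 1 : Fin (m+1) → ℝ) i = 0 := Pi.single_eq_of_ne (ne_of_gt hji) 1
    have h2 : (Pi.single j 1 : Fin (m+1) → ℝ) (Fin.last m) = 0 := by
      apply Pi.single_eq_of_ne
      exact ne_of_gt (lt_of_lt_of_le hji (Fin.le_last i))
    rw [h1, h2]
    ring
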